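/- Let Θ = diag(θ₁,…,θ_r) with each θ_i ∈ [0, π/2]. Then ‖Θ − 2 sin(Θ/2)‖_F ≤ ‖sin Θ‖_F², where sin acts entrywise on the diagonal and the Frobenius norm of a diagonal matrix is the ℓ₂ norm of its diagonal. -/

import Mathlib

open Real

lemma scalar_key {x : ℝ} (h0 : 0 ≤ x) (h1 : x ≤ π / 2) :
    x - 2 * Real.sin (x / 2) ≤ Real.sin x ^ 2 := by
  rcases eq_or_lt_of_le h0 with h | h
  · simp [← h]
  set t := x / 2 with ht
  have hx2t : x = 2 * t := by rw [ht]; ring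
  have htpos : 0 < t := by positivity
  have ht4 : t ≤ π / 4 := by rw [ht]; linarith
  have ht1 : t ≤ 1 := by
    have := Real.pi_lt_d2
    linarith
  have hsin : t - t ^ 3 / 4 < Real.sin t := by
    have := Real.sin_gt_sub_cube htpos
    nlinarith [pow_pos htpos 3]
  have hsinle : Real.sin t ≤ t := Real.sin_le htpos.le
  have hcos : Real.sqrt 2 / 2 ≤ Real.cos t := by
    rw [← Real.cos_pi_div_four]
    apply Real.cos_le_cos_of_nonneg_of_le_pi (by positivity) _ ht4
    have := Real.pi_gt_three
    linarith
  have hcossq : (1:ℝ) / 2 ≤ Real.cos t ^ 2 := by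
    have h2 : Real.sqrt 2 / 2 ≥ 0 := by positivity
    have : (Real.sqrt 2 / 2) ^ 2 ≤ Real.cos t ^ 2 := by
      apply sq_le_sq' (by linarith) hcos
    have hs2 : Real.sqrt 2 ^ 2 = 2 := Real.sq_sqrt (by norm_num)
    nlinarith
  have hsin2 : Real.sin x = 2 * Real.sin t * Real.cos t := by
    rw [hx2t, Real.sin_two_mul]
  rw [hsin2, hx2t]
  have hsinpos : 0 ≤ Real.sin t := by
    apply Real.sin_nonneg_of_nonneg_of_le_pi htpos.le
    have := Real.pi_gt_three
    linarith
  -- need 2t - 2 sin t ≤ 4 sin²t cos²t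
  have hpi : π < 3.15 := Real.pi_lt_d2
  nlinarith [sq_nonneg (Real.sin t), sq_nonneg t, sq_nonneg (t - Real.sin t),
    mul_le_mul_of_nonneg_left hcossq (by positivity : (0:ℝ) ≤ 4 * Real.sin t ^ 2),
    sq_nonneg (t*t)]

lemma scalar_nonneg {x : ℝ} (h0 : 0 ≤ x) :
    0 ≤ x - 2 * Real.sin (x / 2) := by
  have := Real.sin_le (show 0 ≤ x / 2 by linarith)
  linarith

/-- For `Θ = diag(θ₁,…,θ_r)` with `θ_i ∈ [0, π/2]`:
`‖Θ − 2 sin(Θ/2)‖_F ≤ ‖sin Θ‖_F²`, i.e.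
`√(Σ_i (θ_i − 2 sin(θ_i/2))²) ≤ Σ_i sin²(θ_i)`. -/
theorem diag_theta_minus_two_sin_half_le {r : ℕ} (θ : Fin r → ℝ)
    (hθ : ∀ i, θ i ∈ Set.Icc 0 (π / 2)) :
    Real.sqrt (∑ i, (θ i - 2 * Real.sin (θ i / 2)) ^ 2)
      ≤ ∑ i, Real.sin (θ i) ^ 2 := by
  have hb : ∀ i, (0:ℝ) ≤ Real.sin (θ i) ^ 2 := fun i => sq_nonneg _
  have hsum_b : (0:ℝ) ≤ ∑ i, Real.sin (θ i) ^ 2 := Finset.sum_nonneg fun i _ => hb i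
  rw [show (∑ i, Real.sin (θ i) ^ 2) = Real.sqrt ((∑ i, Real.sin (θ i) ^ 2) ^ 2) by
    rw [Real.sqrt_sq hsum_b]]
  apply Real.sqrt_le_sqrt
  calc ∑ i, (θ i - 2 * Real.sin (θ i / 2)) ^ 2
      ≤ ∑ i, (Real.sin (θ i) ^ 2) * (∑ j, Real.sin (θ j) ^ 2) := by
        apply Finset.sum_le_sum
        intro i _
        obtain ⟨h0, h1⟩ := hθ i
        have ha := scalar_nonneg h0
        have hab := scalar_key h0 h1
        have hbS : Real.sin (θ i) ^ 2 ≤ ∑ j, Real.sin (θ j) ^ 2 :=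
          Finset.single_le_sum (fun j _ => hb j) (Finset.mem_univ i)
        calc (θ i - 2 * Real.sin (θ i / 2)) ^ 2
            ≤ (Real.sin (θ i) ^ 2) ^ 2 := by nlinarith
          _ ≤ (Real.sin (θ i) ^ 2) * (∑ j, Real.sin (θ j) ^ 2) := by nlinarith
    _ = (∑ i, Real.sin (θ i) ^ 2) ^ 2 := by rw [← Finset.sum_mul]; ring
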